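/- arXiv:1507.04123 — 2 statements merged into one kernel-verified Lean document; each statement's English description precedes it below -/
import Mathlib

section
/- For n ≥ 1, Ψ(Pₙ(x)) = 0, where Pₙ(x) = Σ_{k=0}^{n} (q^{−n};q)_k (q^{n+1};q)_k (q(1+(q−1)x);q)_k qᵏ / ((q;q)_k)³. Hence the Carlitz q-Bernoulli numbers βₙ are the moments of this family of orthogonal polynomials of q-Hahn type with parameters c=d=0. -/
open Finset Polynomial PowerSeries

noncomputable section

/-- The variable `q`, viewed as a rational function over `ℚ`. -/
def qv : RatFunc ℚ := RatFunc.X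

/-- The Carlitz q-Bernoulli numbers: `β 0 = 1` together with the umbral recurrence
`q·(qβ+1)^n − β_n = [n = 1]` for `n ≥ 1`, where after binomial expansion the powers
`β^k` are replaced by `β k`. -/
def IsCarlitz (β : ℕ → RatFunc ℚ) : Prop :=
  β 0 = 1 ∧ ∀ n : ℕ, 1 ≤ n →
    qv * (∑ k ∈ Finset.range (n + 1), (n.choose k : RatFunc ℚ) * qv ^ k * β k) - β n
      = if n = 1 then 1 else 0

/-- The linear functional `Ψ` on polynomials in `x`, sending `xⁿ` to `β n`. -/
def Psi (β : ℕ → RatFunc ℚ) (p : Polynomial (RatFunc ℚ)) : RatFunc ℚ :=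
  p.sum fun n a => a * β n

/-- The q-Pochhammer symbol `(a; q)_k = (1−a)(1−qa)⋯(1−q^{k−1}a)`. -/
def qPoch (a : RatFunc ℚ) (k : ℕ) : RatFunc ℚ :=
  ∏ j ∈ Finset.range k, (1 - qv ^ j * a)

/-- The polynomial q-Pochhammer symbol `(q(1+(q−1)x); q)_k`. -/
def polyPoch (k : ℕ) : Polynomial (RatFunc ℚ) :=
  ∏ j ∈ Finset.range k,
    (1 - Polynomial.C (qv ^ (j + 1)) * (1 + Polynomial.C (qv - 1) * Polynomial.X))

/-- The q-Hahn-type polynomials `Pₙ` with parameters `c = d = 0`. -/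
def P (n : ℕ) : Polynomial (RatFunc ℚ) :=
  ∑ k ∈ Finset.range (n + 1),
    Polynomial.C (qPoch (qv ^ (-(n : ℤ))) k * qPoch (qv ^ (n + 1)) k * qv ^ k /
      (qPoch qv k) ^ 3) * polyPoch k

-- auxiliary lemmas

lemma qv_ne_zero : qv ≠ 0 := RatFunc.X_ne_zero

lemma qv_pow_ne_one {m : ℕ} (hm : 1 ≤ m) : qv ^ m ≠ 1 := by
  intro hmeq
  have h : (Polynomial.X : Polynomial ℚ) ^ m = 1 := by
    apply RatFunc.algebraMap_injective ℚ
    simpa [qv, map_pow] using hmeq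
  have := congrArg Polynomial.natDegree h
  simp [Polynomial.natDegree_X_pow] at this
  omega

lemma one_sub_ne {m : ℕ} (hm : 1 ≤ m) : (1 : RatFunc ℚ) - qv ^ m ≠ 0 :=
  sub_ne_zero.mpr (Ne.symm (qv_pow_ne_one hm))

lemma qPoch_qv_ne_zero (k : ℕ) : qPoch qv k ≠ 0 := by
  rw [qPoch]
  apply Finset.prod_ne_zero_iff.mpr
  intro j _
  rw [← pow_succ]
  exact one_sub_ne (Nat.succ_le_succ (Nat.zero_le j))

lemma Psi_monomial (β : ℕ → RatFunc ℚ) (n : ℕ) (a : RatFunc ℚ) :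
    Psi β (Polynomial.monomial n a) = a * β n :=
  Polynomial.sum_monomial_index a _ (by simp)

lemma Psi_add (β : ℕ → RatFunc ℚ) (p r : Polynomial (RatFunc ℚ)) :
    Psi β (p + r) = Psi β p + Psi β r :=
  Polynomial.sum_add_index p r _ (by simp) (fun _ _ _ => add_mul _ _ _)

lemma Psi_zero (β : ℕ → RatFunc ℚ) : Psi β 0 = 0 := Polynomial.sum_zero_index _

lemma Psi_C_mul (β : ℕ → RatFunc ℚ) (c : RatFunc ℚ) (p : Polynomial (RatFunc ℚ)) :
    Psi β (Polynomial.C c * p) = c * Psi β p := by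
  induction p using Polynomial.induction_on' with
  | add p r hp hr => rw [mul_add, Psi_add, Psi_add, hp, hr, mul_add]
  | monomial n a => rw [Polynomial.C_mul_monomial, Psi_monomial, Psi_monomial]; ring

lemma Psi_sum (β : ℕ → RatFunc ℚ) {ι : Type*} (s : Finset ι)
    (g : ι → Polynomial (RatFunc ℚ)) :
    Psi β (∑ i ∈ s, g i) = ∑ i ∈ s, Psi β (g i) := by
  classical
  induction s using Finset.induction_on with
  | empty => simp [Psi_zero]
  | insert _ _ hm ih => rw [Finset.sum_insert hm, Finset.sum_insert hm, Psi_add, ih]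

lemma Psi_one (β : ℕ → RatFunc ℚ) (h1 : β 0 = 1) : Psi β 1 = 1 := by
  have e : (1 : Polynomial (RatFunc ℚ)) = Polynomial.monomial 0 1 := by simp
  rw [e, Psi_monomial, h1, one_mul]

lemma Psi_X_pow (β : ℕ → RatFunc ℚ) (k : ℕ) : Psi β (Polynomial.X ^ k) = β k := by
  rw [Polynomial.X_pow_eq_monomial, Psi_monomial, one_mul]

lemma Psi_comp_monomial (β : ℕ → RatFunc ℚ) (n : ℕ) (a : RatFunc ℚ) :
    Psi β ((Polynomial.monomial n a).comp (Polynomial.C qv * Polynomial.X + 1)) =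
      a * ∑ k ∈ Finset.range (n + 1), (n.choose k : RatFunc ℚ) * qv ^ k * β k := by
  rw [Polynomial.monomial_comp, Psi_C_mul, add_pow, Psi_sum]
  congr 1
  apply Finset.sum_congr rfl
  intro k _
  have e : (Polynomial.C qv * Polynomial.X) ^ k * 1 ^ (n - k) *
        ((n.choose k : ℕ) : Polynomial (RatFunc ℚ))
      = Polynomial.C ((n.choose k : RatFunc ℚ) * qv ^ k) * Polynomial.X ^ k := by
    simp only [one_pow, mul_one, mul_pow, ← Polynomial.C_pow, ← Polynomial.C_eq_natCast,
      Polynomial.C_mul]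
    ring
  rw [e, Psi_C_mul, Psi_X_pow]

lemma carlitz_fe (β : ℕ → RatFunc ℚ) (h : IsCarlitz β) (f : Polynomial (RatFunc ℚ)) :
    qv * Psi β (f.comp (Polynomial.C qv * Polynomial.X + 1)) - Psi β f
      = (qv - 1) * f.coeff 0 + f.coeff 1 := by
  induction f using Polynomial.induction_on' with
  | add p r hp hr =>
    rw [Polynomial.add_comp, Psi_add, Psi_add, Polynomial.coeff_add, Polynomial.coeff_add]
    linear_combination hp + hr
  | monomial n a =>
    rw [Psi_comp_monomial, Psi_monomial, Polynomial.coeff_monomial, Polynomial.coeff_monomial]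
    match n with
    | 0 => simp [h.1]; ring
    | (n+1) =>
      have hc := h.2 (n+1) (Nat.succ_le_succ (Nat.zero_le n))
      by_cases hn1 : n + 1 = 1 <;> simp at hn1 <;> simp [hn1] at hc ⊢ <;> linear_combination a * hc

lemma polyPoch_comp (k : ℕ) :
    (Polynomial.C (1 - qv) * Polynomial.X * polyPoch k).comp
        (Polynomial.C qv * Polynomial.X + 1) = polyPoch (k + 1) := by
  have hfac : ∀ j : ℕ,
      (1 - Polynomial.C (qv ^ (j + 1)) *
          (1 + Polynomial.C (qv - 1) * Polynomial.X)).comp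
        (Polynomial.C qv * Polynomial.X + 1)
      = 1 - Polynomial.C (qv ^ (j + 1 + 1)) *
          (1 + Polynomial.C (qv - 1) * Polynomial.X) := by
    intro j
    simp only [Polynomial.sub_comp, Polynomial.one_comp, Polynomial.mul_comp,
      Polynomial.C_comp, Polynomial.add_comp, Polynomial.X_comp]
    simp only [Polynomial.C_pow, Polynomial.C_sub, Polynomial.C_1]
    ring
  have h0 : Polynomial.C (1 - qv) * (Polynomial.C qv * Polynomial.X + 1)
      = 1 - Polynomial.C (qv ^ (0 + 1)) *
          (1 + Polynomial.C (qv - 1) * Polynomial.X) := by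
    simp only [Polynomial.C_sub, Polynomial.C_1, zero_add, pow_one]
    ring
  rw [Polynomial.mul_comp, Polynomial.mul_comp, Polynomial.C_comp, Polynomial.X_comp]
  unfold polyPoch
  rw [Polynomial.prod_comp, Finset.prod_congr rfl (fun j _ => hfac j),
    Finset.prod_range_succ']
  rw [h0, mul_comm]

lemma polyPoch_coeff_zero (k : ℕ) : (polyPoch k).coeff 0 = qPoch qv k := by
  rw [Polynomial.coeff_zero_eq_eval_zero]
  unfold polyPoch qPoch
  rw [Polynomial.eval_prod]
  apply Finset.prod_congr rfl
  intro j _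
  simp [pow_succ]

lemma polyPoch_succ (k : ℕ) :
    polyPoch (k + 1) = polyPoch k *
      (Polynomial.C (1 - qv ^ (k + 1)) -
        Polynomial.C (qv ^ (k + 1) * (qv - 1)) * Polynomial.X) := by
  unfold polyPoch
  rw [Finset.prod_range_succ]
  congr 1
  simp only [Polynomial.C_sub, Polynomial.C_mul, Polynomial.C_1, Polynomial.C_pow]
  ring

lemma psi_polyPoch (β : ℕ → RatFunc ℚ) (h : IsCarlitz β) (k : ℕ) :
    Psi β (polyPoch k) = (1 - qv) * qPoch qv k / (1 - qv ^ (k + 1)) := by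
  induction k with
  | zero =>
    have e0 : polyPoch 0 = 1 := by simp [polyPoch]
    have e1 : qPoch qv 0 = 1 := by simp [qPoch]
    have hne : (1 : RatFunc ℚ) - qv ≠ 0 := by simpa using one_sub_ne le_rfl
    rw [e0, Psi_one β h.1, e1, pow_one, mul_one, div_self hne]
  | succ k ih =>
    have hfe := carlitz_fe β h (Polynomial.C (1 - qv) * Polynomial.X * polyPoch k)
    rw [polyPoch_comp] at hfe
    have hc0 : (Polynomial.C (1 - qv) * Polynomial.X * polyPoch k).coeff 0 = 0 := by
      rw [Polynomial.mul_coeff_zero, Polynomial.mul_coeff_zero]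
      simp
    have hc1 : (Polynomial.C (1 - qv) * Polynomial.X * polyPoch k).coeff 1
        = (1 - qv) * qPoch qv k := by
      rw [mul_assoc, Polynomial.coeff_C_mul]
      have hx : (Polynomial.X * polyPoch k).coeff 1 = (polyPoch k).coeff 0 :=
        Polynomial.coeff_X_mul (polyPoch k) 0
      rw [hx, polyPoch_coeff_zero]
    have hPsif : Psi β (Polynomial.C (1 - qv) * Polynomial.X * polyPoch k)
        = (1 - qv) * Psi β (Polynomial.X * polyPoch k) := by
      rw [mul_assoc, Psi_C_mul]
    have hsucc : Psi β (polyPoch (k + 1))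
        = (1 - qv ^ (k + 1)) * Psi β (polyPoch k)
          - qv ^ (k + 1) * (qv - 1) * Psi β (Polynomial.X * polyPoch k) := by
      have e : polyPoch k *
            (Polynomial.C (1 - qv ^ (k + 1)) -
              Polynomial.C (qv ^ (k + 1) * (qv - 1)) * Polynomial.X)
          = Polynomial.C (1 - qv ^ (k + 1)) * polyPoch k
            + Polynomial.C (-(qv ^ (k + 1) * (qv - 1))) *
                (Polynomial.X * polyPoch k) := by
        rw [Polynomial.C_neg]; ring
      rw [polyPoch_succ, e, Psi_add, Psi_C_mul, Psi_C_mul]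
      ring
    rw [hc0, hc1, hPsif] at hfe
    have hrec : (1 - qv ^ (k + 2)) * Psi β (polyPoch (k + 1))
        = (1 - qv ^ (k + 1)) * Psi β (polyPoch k)
          - qv ^ (k + 1) * (1 - qv) * qPoch qv k := by
      linear_combination hsucc - qv ^ (k + 1) * hfe
    have h1 : (1 : RatFunc ℚ) - qv ^ (k + 1) ≠ 0 :=
      one_sub_ne (Nat.succ_le_succ (Nat.zero_le k))
    have h2 : (1 : RatFunc ℚ) - qv ^ (k + 2) ≠ 0 :=
      one_sub_ne (by omega)
    have ihm : (1 - qv ^ (k + 1)) * Psi β (polyPoch k) = (1 - qv) * qPoch qv k := by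
      rw [ih]
      field_simp
    have hq : qPoch qv (k + 1) = qPoch qv k * (1 - qv ^ k * qv) := by
      unfold qPoch
      rw [Finset.prod_range_succ]
    rw [hq, eq_div_iff h2]
    linear_combination hrec + ihm

def sAux (n k : ℕ) : RatFunc ℚ :=
  -(qv ^ n) * (1 - qv) * (1 - qv ^ k) * qPoch (qv ^ (-(n : ℤ))) k *
      qPoch (qv ^ (n + 1)) k /
    ((qPoch qv k) ^ 2 * (1 - qv ^ n) * (1 - qv ^ (n + 1)))

lemma qPoch_succ (a : RatFunc ℚ) (k : ℕ) :
    qPoch a (k + 1) = qPoch a k * (1 - qv ^ k * a) := by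
  unfold qPoch
  rw [Finset.prod_range_succ]

lemma step (n k : ℕ) (hn : 1 ≤ n) :
    qPoch (qv ^ (-(n : ℤ))) k * qPoch (qv ^ (n + 1)) k * qv ^ k / (qPoch qv k) ^ 3 *
      ((1 - qv) * qPoch qv k / (1 - qv ^ (k + 1)))
    = sAux n (k + 1) - sAux n k := by
  have hzn : (qv : RatFunc ℚ) ^ (-(n : ℤ)) = (qv ^ n)⁻¹ := by
    rw [zpow_neg, zpow_natCast]
  have h1' : (1 : RatFunc ℚ) - qv ^ k * qv ≠ 0 := by
    rw [← pow_succ]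
    exact one_sub_ne (Nat.succ_le_succ (Nat.zero_le k))
  have hP : qPoch qv k ≠ 0 := qPoch_qv_ne_zero k
  have hn0 : (1 : RatFunc ℚ) - qv ^ n ≠ 0 := one_sub_ne hn
  have hqn : (qv : RatFunc ℚ) ^ n ≠ 0 := pow_ne_zero _ qv_ne_zero
  unfold sAux
  rw [qPoch_succ, qPoch_succ (qv ^ (n+1)), qPoch_succ qv, hzn]
  simp only [pow_succ]
  generalize qPoch ((qv ^ n)⁻¹) k = A
  generalize qPoch (qv ^ n * qv) k = B
  generalize qPoch qv k = Pk at hP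
  generalize qv ^ k = x at h1'
  generalize hgy : qv ^ n = y at hn0 hqn
  have hy1 : (1 : RatFunc ℚ) - y * qv ≠ 0 := by
    rw [← hgy, ← pow_succ]
    exact one_sub_ne (Nat.succ_le_succ (Nat.zero_le n))
  clear hzn hgy hn
  simp only [pow_zero, one_mul]
  have hD1 : Pk * (1 - x * qv) * (Pk * (1 - x * qv)) * (1 - y) * (1 - y * qv) ≠ 0 :=
    mul_ne_zero (mul_ne_zero (mul_ne_zero (mul_ne_zero hP h1') (mul_ne_zero hP h1')) hn0) hy1
  have hD2 : Pk * Pk * (1 - y) * (1 - y * qv) ≠ 0 :=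
    mul_ne_zero (mul_ne_zero (mul_ne_zero hP hP) hn0) hy1
  have hDt : Pk * Pk * Pk * (1 - x * qv) ≠ 0 :=
    mul_ne_zero (mul_ne_zero (mul_ne_zero hP hP) hP) h1'
  rw [div_mul_div_comm, div_sub_div _ _ hD1 hD2, div_eq_div_iff hDt (mul_ne_zero hD1 hD2)]
  field_simp
  ring

lemma sAux_zero (n : ℕ) : sAux n 0 = 0 := by
  simp [sAux]

lemma sAux_top (n : ℕ) : sAux n (n + 1) = 0 := by
  have h : qPoch ((qv ^ n)⁻¹) (n + 1) = 0 := by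
    rw [qPoch]
    apply Finset.prod_eq_zero (Finset.self_mem_range_succ n)
    rw [mul_inv_cancel₀ (pow_ne_zero _ qv_ne_zero), sub_self]
  simp [sAux, zpow_neg, zpow_natCast, h]

/-- `Ψ` vanishes on `Pₙ` for `n ≥ 1`: the Carlitz q-Bernoulli numbers are the moments
of the q-Hahn family with parameters `c = d = 0`. -/
theorem psi_qHahn00 (β : ℕ → RatFunc ℚ) (h : IsCarlitz β) (n : ℕ) (hn : 1 ≤ n) :
    Psi β (P n) = 0 := by
  unfold P
  rw [Psi_sum]
  have he : ∀ k ∈ Finset.range (n + 1),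
      Psi β (Polynomial.C (qPoch (qv ^ (-(n : ℤ))) k * qPoch (qv ^ (n + 1)) k * qv ^ k /
        (qPoch qv k) ^ 3) * polyPoch k) = sAux n (k + 1) - sAux n k := by
    intro k _
    rw [Psi_C_mul, psi_polyPoch β h k, step n k hn]
  rw [Finset.sum_congr rfl he, Finset.sum_range_sub (sAux n), sAux_top, sAux_zero, sub_zero]
end
end

section
/- For all n ≥ 0, (1/z)∫₀^z βₙ(y)dy = (1/(q−1)ⁿ) Σ_{k=0}^{n} C(n,k)(−1)^{n−k} [k+1]_c/[k+1]_q, where c = 1+(q−1)z and βₙ(y) is the n-th Carlitz q-Bernoulli polynomial. -/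
open Finset Polynomial PowerSeries

noncomputable section

/-- The q-integer `[m]_q = (q^m − 1)/(q − 1)`, for `m : ℤ`. -/
def qint (m : ℤ) : RatFunc ℚ := (qv ^ m - 1) / (qv - 1)

/-- The q-factorial `[n]!_q`. -/
def qfact (n : ℕ) : RatFunc ℚ := ∏ t ∈ Finset.range n, qint (t + 1)

/-- The Gaussian binomial coefficient. -/
def qbinom (n k : ℕ) : RatFunc ℚ := qfact n / (qfact k * qfact (n - k))

/-- The q-binomial polynomial
`[i, x; d]_q = (1/[d]!_q) ∏_{t=1}^{d} ([i−d+t]_q + q^{i−d+t} x)`. -/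
def qbase (i d : ℕ) : Polynomial (RatFunc ℚ) :=
  Polynomial.C (qfact d)⁻¹ *
    ∏ t ∈ Finset.Icc 1 d,
      (Polynomial.C (qint ((i : ℤ) - d + t)) +
        Polynomial.C (qv ^ ((i : ℤ) - d + t)) * Polynomial.X)

/-- The Carlitz q-Bernoulli polynomial `βₙ(z) = Ψ((z + (z(q−1)+1)x)ⁿ)`,
expanded as a polynomial in `z` (the variable `X`). -/
def Bpoly (β : ℕ → RatFunc ℚ) (n : ℕ) : Polynomial (RatFunc ℚ) :=
  ∑ k ∈ Finset.range (n + 1),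
    Polynomial.C ((n.choose k : RatFunc ℚ) * β k) *
      (Polynomial.C (qv - 1) * Polynomial.X + 1) ^ k * Polynomial.X ^ (n - k)

/-! ### Auxiliary machinery -/

/-- The moment sum `Ψ((1+(q−1)x)^n) = ∑ C(n,j)(q−1)^j β_j`. -/
def hsum (β : ℕ → RatFunc ℚ) (n : ℕ) : RatFunc ℚ :=
  ∑ j ∈ range (n+1), (n.choose j : RatFunc ℚ) * (qv - 1) ^ j * β j

lemma swap2 {A : Type*} [CommRing A] (n : ℕ) (a b c : A) (f : ℕ → A) :
    ∑ k ∈ range (n+1), (n.choose k : A) * a ^ k * c ^ (n-k) *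
        ∑ j ∈ range (k+1), (k.choose j : A) * b ^ j * f j
      = ∑ j ∈ range (n+1), (n.choose j : A) * (a*b) ^ j * f j * (a+c) ^ (n-j) := by
  have h1 : ∀ k ∈ range (n+1), (n.choose k : A) * a ^ k * c ^ (n-k) *
        ∑ j ∈ range (k+1), (k.choose j : A) * b ^ j * f j
      = ∑ j ∈ range (k+1), (n.choose k : A) * ((k.choose j : A)) * a ^ k * c ^ (n-k) * b ^ j * f j := by
    intro k _
    rw [Finset.mul_sum]
    exact Finset.sum_congr rfl fun j _ => by ring
  rw [Finset.sum_congr rfl h1]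
  simp only [Finset.range_eq_Ico]
  rw [← Finset.sum_Ico_Ico_comm]
  apply Finset.sum_congr rfl
  intro j hj
  have hjn : j ≤ n := by simp only [Finset.mem_Ico] at hj; omega
  rw [Finset.sum_Ico_eq_sum_range]
  have h2 : n + 1 - j = (n - j) + 1 := by omega
  rw [h2]
  have h3 : ∀ m ∈ range (n - j + 1),
      (n.choose (j+m) : A) * ((j+m).choose j : A) * a ^ (j+m) * c ^ (n-(j+m)) * b ^ j * f j
      = ((n.choose j : A) * (a*b) ^ j * f j) * (a ^ m * c ^ (n-j-m) * ((n-j).choose m : A)) := by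
    intro m hm
    have hm' : m ≤ n - j := by simp only [Finset.mem_range] at hm; omega
    have hc : (n.choose (j+m) : ℕ) * ((j+m).choose j) = n.choose j * (n-j).choose m := by
      have := Nat.choose_mul (n := n) (Nat.le_add_right j m)
      simpa using this
    have hc' : (n.choose (j+m) : A) * ((j+m).choose j : A) = (n.choose j : A) * ((n-j).choose m : A) := by
      exact_mod_cast congrArg (Nat.cast : ℕ → A) hc
    have he : n - (j+m) = n - j - m := by omega
    rw [he, pow_add, hc']
    ring
  rw [Finset.sum_congr rfl h3, ← Finset.mul_sum, add_pow a c (n-j)]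

lemma carlitz_rec (β : ℕ → RatFunc ℚ) (h : IsCarlitz β) (j : ℕ) :
    qv * (∑ i ∈ range (j+1), (j.choose i : RatFunc ℚ) * qv ^ i * β i)
      = β j + (if j = 1 then 1 else 0) + (if j = 0 then qv - 1 else 0) := by
  rcases Nat.eq_zero_or_pos j with rfl | hj
  · simp [h.1]
  · have hr := h.2 j hj
    have hj0 : j ≠ 0 := by omega
    rw [if_neg hj0, add_zero]
    linear_combination hr

lemma gamma_eq (β : ℕ → RatFunc ℚ) (h : IsCarlitz β) (n : ℕ) :
    (qv ^ (n+1) - 1) * hsum β n = ((n : RatFunc ℚ) + 1) * (qv - 1) := by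
  have hswap := swap2 n (qv - 1) qv 1 β
  simp only [one_pow, mul_one] at hswap
  have hrhs : ∑ j ∈ range (n+1), (n.choose j : RatFunc ℚ) * ((qv-1)*qv) ^ j * β j * ((qv-1)+1) ^ (n-j)
      = qv ^ n * hsum β n := by
    rw [hsum, Finset.mul_sum]
    apply Finset.sum_congr rfl
    intro j hj
    have hj' : j ≤ n := by simp only [Finset.mem_range] at hj; omega
    have hq : (qv : RatFunc ℚ) ^ j * qv ^ (n-j) = qv ^ n := by
      rw [← pow_add]; congr 1; omega
    have : ((qv-1)+1 : RatFunc ℚ) = qv := by ring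
    rw [this, mul_pow]
    calc (n.choose j : RatFunc ℚ) * ((qv-1)^j * qv^j) * β j * qv ^ (n-j)
        = ((n.choose j : RatFunc ℚ) * (qv-1)^j * β j) * (qv^j * qv^(n-j)) := by ring
      _ = qv ^ n * ((n.choose j : RatFunc ℚ) * (qv-1)^j * β j) := by rw [hq]; ring
  have hlhs : qv * (∑ k ∈ range (n+1), (n.choose k : RatFunc ℚ) * (qv-1) ^ k *
        ∑ j ∈ range (k+1), (k.choose j : RatFunc ℚ) * qv ^ j * β j)
      = hsum β n + (n : RatFunc ℚ) * (qv - 1) + (qv - 1) := by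
    rw [Finset.mul_sum]
    have step : ∀ k ∈ range (n+1), qv * ((n.choose k : RatFunc ℚ) * (qv-1) ^ k *
          ∑ j ∈ range (k+1), (k.choose j : RatFunc ℚ) * qv ^ j * β j)
        = (n.choose k : RatFunc ℚ) * (qv-1) ^ k * β k
          + (if k = 1 then (n.choose k : RatFunc ℚ) * (qv-1) ^ k else 0)
          + (if k = 0 then (n.choose k : RatFunc ℚ) * (qv-1) ^ k * (qv-1) else 0) := by
      intro k _
      have := carlitz_rec β h k
      calc qv * ((n.choose k : RatFunc ℚ) * (qv-1) ^ k *
            ∑ j ∈ range (k+1), (k.choose j : RatFunc ℚ) * qv ^ j * β j)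
          = (n.choose k : RatFunc ℚ) * (qv-1) ^ k *
            (qv * ∑ j ∈ range (k+1), (k.choose j : RatFunc ℚ) * qv ^ j * β j) := by ring
        _ = (n.choose k : RatFunc ℚ) * (qv-1) ^ k *
            (β k + (if k = 1 then 1 else 0) + (if k = 0 then qv - 1 else 0)) := by rw [this]
        _ = _ := by split_ifs <;> ring
    rw [Finset.sum_congr rfl step, Finset.sum_add_distrib, Finset.sum_add_distrib]
    have e1 : (∑ k ∈ range (n+1), if k = 1 then (n.choose k : RatFunc ℚ) * (qv-1) ^ k else 0)
        = (n : RatFunc ℚ) * (qv - 1) := by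
      rw [Finset.sum_ite_eq' (range (n+1)) 1
          (fun k => (n.choose k : RatFunc ℚ) * (qv-1) ^ k)]
      rcases Nat.eq_zero_or_pos n with rfl | hn
      · simp
      · rw [if_pos (by simp only [Finset.mem_range]; omega)]
        simp [Nat.choose_one_right]
    have e2 : (∑ k ∈ range (n+1), if k = 0 then (n.choose k : RatFunc ℚ) * (qv-1) ^ k * (qv-1) else 0)
        = qv - 1 := by
      rw [Finset.sum_ite_eq' (range (n+1)) 0
          (fun k => (n.choose k : RatFunc ℚ) * (qv-1) ^ k * (qv-1))]
      simp
    rw [e1, e2, hsum]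
  have key : qv ^ (n+1) * hsum β n = hsum β n + ((n : RatFunc ℚ) + 1) * (qv - 1) := by
    have : qv ^ (n+1) * hsum β n = qv * (qv ^ n * hsum β n) := by ring
    rw [this, ← hrhs, ← hswap, hlhs]; ring
  linear_combination key

lemma bpoly_eq (β : ℕ → RatFunc ℚ) (n : ℕ) :
    Polynomial.C ((qv - 1)^n) * Bpoly β n
      = ∑ k ∈ range (n+1),
          Polynomial.C ((n.choose k : RatFunc ℚ) * (-1)^(n-k) * hsum β k) *
            (Polynomial.C (qv-1) * Polynomial.X + 1) ^ k := by
  have key := swap2 n (Polynomial.C (qv-1) * Polynomial.X + 1) (Polynomial.C (qv-1)) (-1)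
      (fun j => Polynomial.C (β j))
  have hL : ∀ k ∈ range (n+1),
      (n.choose k : Polynomial (RatFunc ℚ)) * (Polynomial.C (qv-1) * Polynomial.X + 1) ^ k *
          (-1 : Polynomial (RatFunc ℚ)) ^ (n-k) *
          ∑ j ∈ range (k+1), (k.choose j : Polynomial (RatFunc ℚ)) * (Polynomial.C (qv-1)) ^ j *
            Polynomial.C (β j)
      = Polynomial.C ((n.choose k : RatFunc ℚ) * (-1)^(n-k) * hsum β k) *
          (Polynomial.C (qv-1) * Polynomial.X + 1) ^ k := by
    intro k _
    rw [hsum]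
    push_cast [map_mul, map_sum, map_pow, map_natCast, map_neg, map_one]
    ring
  have hR : ∀ j ∈ range (n+1),
      (n.choose j : Polynomial (RatFunc ℚ)) *
          ((Polynomial.C (qv-1) * Polynomial.X + 1) * Polynomial.C (qv-1)) ^ j *
          Polynomial.C (β j) *
          ((Polynomial.C (qv-1) * Polynomial.X + 1) + (-1)) ^ (n-j)
      = Polynomial.C ((qv - 1)^n) *
          (Polynomial.C ((n.choose j : RatFunc ℚ) * β j) *
            (Polynomial.C (qv - 1) * Polynomial.X + 1) ^ j * Polynomial.X ^ (n - j)) := by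
    intro j hj
    have hj' : j ≤ n := by simp only [Finset.mem_range] at hj; omega
    have hsplit : (Polynomial.C (qv-1) : Polynomial (RatFunc ℚ)) ^ j * (Polynomial.C (qv-1)) ^ (n-j)
        = Polynomial.C ((qv-1)^n) := by
      rw [← pow_add, ← map_pow]
      congr 2
      omega
    have hstep : ((Polynomial.C (qv-1) * Polynomial.X + 1) + (-1) : Polynomial (RatFunc ℚ)) ^ (n-j)
        = (Polynomial.C (qv-1)) ^ (n-j) * Polynomial.X ^ (n-j) := by
      rw [← mul_pow]; congr 1; ring
    have hcast : Polynomial.C ((n.choose j : RatFunc ℚ) * β j)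
        = (n.choose j : Polynomial (RatFunc ℚ)) * Polynomial.C (β j) := by
      rw [map_mul, Polynomial.C_eq_natCast]
    rw [hstep, hcast, ← hsplit, mul_pow]
    ring
  rw [Bpoly, Finset.mul_sum, ← Finset.sum_congr rfl hR, ← key, Finset.sum_congr rfl hL]

/-- The formal antiderivative functional `p ↦ ∫₀^z p(y) dy`. -/
def Ii (z : RatFunc ℚ) (p : Polynomial (RatFunc ℚ)) : RatFunc ℚ :=
  p.sum fun m a => a * z ^ (m + 1) / ((m : RatFunc ℚ) + 1)

lemma Ii_zero (z : RatFunc ℚ) : Ii z 0 = 0 := by simp [Ii]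

lemma Ii_add (z : RatFunc ℚ) (p q : Polynomial (RatFunc ℚ)) :
    Ii z (p + q) = Ii z p + Ii z q := by
  unfold Ii
  apply Polynomial.sum_add_index
  · intro i; simp
  · intro i a b; rw [add_mul, add_div]

lemma Ii_sum (z : RatFunc ℚ) {ι : Type*} (s : Finset ι) (g : ι → Polynomial (RatFunc ℚ)) :
    Ii z (∑ i ∈ s, g i) = ∑ i ∈ s, Ii z (g i) := by
  induction s using Finset.cons_induction with
  | empty => simp [Ii_zero]
  | cons i s hi ih => rw [Finset.sum_cons, Finset.sum_cons, Ii_add, ih]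

lemma Ii_C_mul (z : RatFunc ℚ) (c : RatFunc ℚ) (p : Polynomial (RatFunc ℚ)) :
    Ii z (Polynomial.C c * p) = c * Ii z p := by
  unfold Ii
  rw [← Polynomial.smul_eq_C_mul, Polynomial.sum_smul_index _ _ _ (fun i => by simp)]
  rw [Polynomial.sum_def, Polynomial.sum_def, Finset.mul_sum]
  exact Finset.sum_congr rfl fun m _ => by ring

lemma Ii_X_pow (z : RatFunc ℚ) (m : ℕ) :
    Ii z (Polynomial.X ^ m) = z ^ (m+1) / ((m : RatFunc ℚ) + 1) := by
  unfold Ii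
  rw [Polynomial.X_pow_eq_monomial, Polynomial.sum_monomial_index _ _ (by simp)]
  rw [one_mul]

lemma qv_sub_one_ne : qv - 1 ≠ 0 := by
  have : (Polynomial.X : Polynomial ℚ) - 1 ≠ 0 := by
    intro hX
    have := congrArg (Polynomial.eval 0) hX
    simp at this
  have h2 : qv - 1 = algebraMap (Polynomial ℚ) (RatFunc ℚ) (Polynomial.X - 1) := by
    rw [map_sub, map_one, qv, RatFunc.algebraMap_X]
  rw [h2]
  simpa using (RatFunc.algebraMap_ne_zero this)

lemma qv_pow_sub_one_ne (m : ℕ) : qv ^ (m+1) - 1 ≠ 0 := by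
  have : (Polynomial.X : Polynomial ℚ) ^ (m+1) - 1 ≠ 0 := by
    intro hX
    have h := congrArg (Polynomial.eval 0) hX
    simp at h
  have h2 : qv ^ (m+1) - 1
      = algebraMap (Polynomial ℚ) (RatFunc ℚ) (Polynomial.X ^ (m+1) - 1) := by
    rw [map_sub, map_one, map_pow, qv, RatFunc.algebraMap_X]
  rw [h2]
  simpa using (RatFunc.algebraMap_ne_zero this)

instance : CharZero (RatFunc ℚ) :=
  charZero_of_injective_algebraMap (algebraMap ℚ (RatFunc ℚ)).injective

lemma natCast_succ_ne (k : ℕ) : ((k : RatFunc ℚ) + 1) ≠ 0 :=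
  Nat.cast_add_one_ne_zero k

lemma sum_int (k : ℕ) (w : RatFunc ℚ) :
    ∑ m ∈ range (k+1), (k.choose m : RatFunc ℚ) * w ^ (m+1) / ((m : RatFunc ℚ) + 1)
      = ((1+w) ^ (k+1) - 1) / ((k : RatFunc ℚ) + 1) := by
  rw [eq_div_iff (natCast_succ_ne k)]
  have step : ∀ m ∈ range (k+1),
      ((k.choose m : RatFunc ℚ) * w ^ (m+1) / ((m : RatFunc ℚ) + 1)) * ((k : RatFunc ℚ) + 1)
        = ((k+1).choose (m+1) : RatFunc ℚ) * w ^ (m+1) := by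
    intro m hm
    have hch : (k + 1) * k.choose m = (k+1).choose (m+1) * (m+1) := by
      exact_mod_cast Nat.add_one_mul_choose_eq k m
    have hch' : ((k : RatFunc ℚ) + 1) * (k.choose m : RatFunc ℚ)
        = ((k+1).choose (m+1) : RatFunc ℚ) * ((m : RatFunc ℚ) + 1) := by
      exact_mod_cast congrArg (Nat.cast : ℕ → RatFunc ℚ) hch
    rw [div_mul_eq_mul_div, div_eq_iff (natCast_succ_ne m)]
    linear_combination w ^ (m+1) * hch'
  rw [Finset.sum_mul, Finset.sum_congr rfl step]
  have expand : (1 + w) ^ (k+1) = ∑ m ∈ range (k+2), ((k+1).choose m : RatFunc ℚ) * w ^ m := by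
    rw [add_comm (1:RatFunc ℚ) w, add_pow]
    exact Finset.sum_congr rfl fun m _ => by ring
  rw [expand, Finset.sum_range_succ' (fun m => ((k+1).choose m : RatFunc ℚ) * w ^ m) (k+1)]
  simp

lemma Ii_Cc_pow (z : RatFunc ℚ) (k : ℕ) :
    Ii z ((Polynomial.C (qv - 1) * Polynomial.X + 1) ^ k)
      = ((1 + (qv-1)*z) ^ (k+1) - 1) / (((k : RatFunc ℚ) + 1) * (qv - 1)) := by
  have expand : (Polynomial.C (qv - 1) * Polynomial.X + 1 : Polynomial (RatFunc ℚ)) ^ k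
      = ∑ m ∈ range (k+1), Polynomial.C ((k.choose m : RatFunc ℚ) * (qv-1)^m) * Polynomial.X ^ m := by
    rw [add_pow]
    apply Finset.sum_congr rfl
    intro m _
    rw [mul_pow, ← map_pow, map_mul, Polynomial.C_eq_natCast]
    ring
  rw [expand, Ii_sum]
  have step : ∀ m ∈ range (k+1),
      Ii z (Polynomial.C ((k.choose m : RatFunc ℚ) * (qv-1)^m) * Polynomial.X ^ m)
        = (k.choose m : RatFunc ℚ) * ((qv-1)*z) ^ (m+1) / ((m : RatFunc ℚ) + 1) / (qv - 1) := by
    intro m _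
    rw [Ii_C_mul, Ii_X_pow]
    have h1 : ((qv-1)*z) ^ (m+1) = (qv-1) * ((qv-1)^m * z^(m+1)) := by
      rw [mul_pow, pow_succ]; ring
    rw [h1]
    have h2 := natCast_succ_ne m
    have h3 := qv_sub_one_ne
    field_simp
  rw [Finset.sum_congr rfl step, ← Finset.sum_div]
  rw [show (∑ m ∈ range (k+1), (k.choose m : RatFunc ℚ) * ((qv-1)*z) ^ (m+1) / ((m : RatFunc ℚ) + 1))
      = ((1+(qv-1)*z) ^ (k+1) - 1) / ((k : RatFunc ℚ) + 1) from sum_int k ((qv-1)*z)]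
  rw [div_div]

/-- `(1/z)∫₀^z βₙ(y) dy = (1/(q−1)ⁿ) Σₖ C(n,k)(−1)^{n−k} [k+1]_c/[k+1]_q`
with `c = 1 + (q−1)z`, where the integral is the formal antiderivative. -/
theorem carlitz_poly_integral (β : ℕ → RatFunc ℚ) (h : IsCarlitz β) (n : ℕ)
    (z : RatFunc ℚ) (hz : z ≠ 0) :
    (1 / z) * ((Bpoly β n).sum fun m a => a * z ^ (m + 1) / ((m : RatFunc ℚ) + 1))
      = (1 / (qv - 1) ^ n) *
        ∑ k ∈ Finset.range (n + 1),
          (n.choose k : RatFunc ℚ) * (-1) ^ (n - k) *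
            (((1 + (qv - 1) * z) ^ (k + 1) - 1) / ((1 + (qv - 1) * z) - 1)) /
              qint (k + 1) := by
  have hpow : ((qv - 1) : RatFunc ℚ) ^ n ≠ 0 := pow_ne_zero n qv_sub_one_ne
  have hIB : (qv-1)^n * Ii z (Bpoly β n)
      = ∑ k ∈ range (n+1), ((n.choose k : RatFunc ℚ) * (-1)^(n-k) * hsum β k) *
          (((1 + (qv-1)*z) ^ (k+1) - 1) / (((k : RatFunc ℚ) + 1) * (qv - 1))) := by
    have hcongr := congrArg (Ii z) (bpoly_eq β n)
    rw [Ii_C_mul, Ii_sum] at hcongr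
    rw [hcongr]
    exact Finset.sum_congr rfl fun k _ => by rw [Ii_C_mul, Ii_Cc_pow]
  show (1 / z) * Ii z (Bpoly β n) = _
  apply mul_left_cancel₀ hpow
  have hr : (qv-1)^n * ((1 / (qv - 1) ^ n) *
      ∑ k ∈ Finset.range (n + 1),
        (n.choose k : RatFunc ℚ) * (-1) ^ (n - k) *
          (((1 + (qv - 1) * z) ^ (k + 1) - 1) / ((1 + (qv - 1) * z) - 1)) / qint (k + 1))
      = ∑ k ∈ Finset.range (n + 1),
        (n.choose k : RatFunc ℚ) * (-1) ^ (n - k) *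
          (((1 + (qv - 1) * z) ^ (k + 1) - 1) / ((1 + (qv - 1) * z) - 1)) / qint (k + 1) := by
    field_simp
  rw [hr, show (qv-1)^n * ((1 / z) * Ii z (Bpoly β n))
      = (1 / z) * ((qv-1)^n * Ii z (Bpoly β n)) from by ring, hIB, Finset.mul_sum]
  apply Finset.sum_congr rfl
  intro k hk
  have hqint : qint ((k : ℤ) + 1) = (qv ^ (k+1) - 1) / (qv - 1) := by
    rw [qint, show ((k : ℤ) + 1) = ((k+1 : ℕ) : ℤ) by push_cast; ring, zpow_natCast]
  have hs : hsum β k = ((k : RatFunc ℚ) + 1) * (qv - 1) / (qv ^ (k+1) - 1) := by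
    rw [eq_div_iff (qv_pow_sub_one_ne k)]
    linear_combination gamma_eq β h k
  rw [hqint, hs]
  have h1 := qv_sub_one_ne
  have h2 := qv_pow_sub_one_ne k
  have h3 := natCast_succ_ne k
  have h4 : (1 + (qv - 1) * z) - 1 = (qv - 1) * z := by ring
  rw [h4]
  field_simp

end
end
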